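/- The relation F ∈ AC*(E) is Borel on C[a,b] × K[a,b]; that is, the set {(F,E) ∈ C[a,b] × K[a,b] : F ∈ AC*(E)} is a Borel subset of the product Polish space. -/

import Mathlib

open MeasureTheory Set Filter

noncomputable section

attribute [local instance] Classical.propDecidable

/-- The oscillation `ω(F, J)` of `F` on the set `J`. -/
def osc (F : ℝ → ℝ) (J : Set ℝ) : ℝ :=
  sSup {d : ℝ | ∃ x ∈ J, ∃ y ∈ J, d = |F x - F y|}

/-- `D` is a `K`-edged pre-partition of `[a,b]`: a finite nonempty collection of
pairwise non-overlapping closed subintervals of `[a,b]` whose endpoints lie in `K`. -/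
def IsPrePartition (a b : ℝ) (K : Set ℝ) (D : Finset (ℝ × ℝ)) : Prop :=
  D.Nonempty ∧
  (∀ p ∈ D, p.1 ≤ p.2 ∧ p.1 ∈ K ∧ p.2 ∈ K ∧ Icc p.1 p.2 ⊆ Icc a b) ∧
  (D : Set (ℝ × ℝ)).Pairwise fun p q => p.2 ≤ q.1 ∨ q.2 ≤ p.1

/-- `F ∈ AC_*(K)`: absolute continuity in the restricted sense on `K`. -/
def ACStar (a b : ℝ) (F : ℝ → ℝ) (K : Set ℝ) : Prop :=
  ∀ ε > (0:ℝ), ∃ δ > (0:ℝ), ∀ D : Finset (ℝ × ℝ), IsPrePartition a b K D →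
    (∑ p ∈ D, (p.2 - p.1)) < δ → (∑ p ∈ D, osc F (Icc p.1 p.2)) < ε

/-- `F ∈ ACG_*(K)`: `K` is a countable union of closed sets `Kₙ ⊆ [a,b]` with `F ∈ AC_*(Kₙ)`. -/
def ACGStar (a b : ℝ) (F : ℝ → ℝ) (K : Set ℝ) : Prop :=
  ∃ C : ℕ → Set ℝ, (∀ n, IsClosed (C n) ∧ C n ⊆ Icc a b ∧ ACStar a b F (C n)) ∧
    K = ⋃ n, C n

/-- `F` is the indefinite Denjoy integral of `f` on `[a,b]`:
`F` is continuous on `[a,b]`, `F(a) = 0`, `F ∈ ACG_*([a,b])`, and `F' = f` a.e. on `[a,b]`. -/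
def HasDenjoyIntegralFn (a b : ℝ) (f F : ℝ → ℝ) : Prop :=
  ContinuousOn F (Icc a b) ∧ F a = 0 ∧ ACGStar a b F (Icc a b) ∧
    ∀ᵐ x ∂(volume.restrict (Icc a b)), HasDerivAt F (f x) x

/-- `f ∈ Den[a,b]`: `f` is Denjoy integrable on `[a,b]`. -/
def DenjoyIntegrable (a b : ℝ) (f : ℝ → ℝ) : Prop :=
  ∃ F : ℝ → ℝ, HasDenjoyIntegralFn a b f F

/-- The Denjoy integral `∫_a^b f` (junk value `0` if `f` is not Denjoy integrable). -/
def denjoyIntegral (a b : ℝ) (f : ℝ → ℝ) : ℝ :=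
  if h : DenjoyIntegrable a b f then Classical.choose h b else 0

/-- `K[a,b]`: the space of closed subsets of `[a,b]` (topologized by the Hausdorff
extended metric, which for the compact set `[a,b]` agrees with the Vietoris topology). -/
abbrev KSpace (a b : ℝ) := TopologicalSpace.Closeds (Icc a b)


section ACStarAux

open Topology TopologicalSpace OmegaCompletePartialOrder

lemma osc_set_eq (F : ℝ → ℝ) (c d : ℝ) :
    {r : ℝ | ∃ x ∈ Icc c d, ∃ y ∈ Icc c d, r = |F x - F y|}
      = (fun z : ℝ × ℝ => |F z.1 - F z.2|) '' (Icc c d ×ˢ Icc c d) := by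
  ext r
  constructor
  · rintro ⟨x, hx, y, hy, rfl⟩; exact ⟨(x, y), ⟨hx, hy⟩, rfl⟩
  · rintro ⟨⟨x, y⟩, ⟨hx, hy⟩, rfl⟩; exact ⟨x, hx, y, hy, rfl⟩

lemma osc_exists {F : ℝ → ℝ} (hF : Continuous F) {c d : ℝ} (hcd : c ≤ d) :
    ∃ u ∈ Icc c d, ∃ v ∈ Icc c d, osc F (Icc c d) = |F u - F v| := by
  have hcont : Continuous fun z : ℝ × ℝ => |F z.1 - F z.2| :=
    ((hF.comp continuous_fst).sub (hF.comp continuous_snd)).abs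
  have hcomp : IsCompact ((fun z : ℝ × ℝ => |F z.1 - F z.2|) '' (Icc c d ×ˢ Icc c d)) :=
    (isCompact_Icc.prod isCompact_Icc).image hcont
  have hne : ((fun z : ℝ × ℝ => |F z.1 - F z.2|) '' (Icc c d ×ˢ Icc c d)).Nonempty :=
    ⟨_, ⟨(c, c), ⟨⟨le_refl c, hcd⟩, ⟨le_refl c, hcd⟩⟩, rfl⟩⟩
  have hmem := hcomp.sSup_mem hne
  rw [osc, osc_set_eq]
  obtain ⟨⟨u, v⟩, ⟨hu, hv⟩, heq⟩ := hmem
  exact ⟨u, hu, v, hv, heq.symm⟩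

lemma le_osc {F : ℝ → ℝ} (hF : Continuous F) {c d u v : ℝ}
    (hu : u ∈ Icc c d) (hv : v ∈ Icc c d) : |F u - F v| ≤ osc F (Icc c d) := by
  have hcont : Continuous fun z : ℝ × ℝ => |F z.1 - F z.2| :=
    ((hF.comp continuous_fst).sub (hF.comp continuous_snd)).abs
  have hcomp : IsCompact ((fun z : ℝ × ℝ => |F z.1 - F z.2|) '' (Icc c d ×ˢ Icc c d)) :=
    (isCompact_Icc.prod isCompact_Icc).image hcont
  rw [osc, osc_set_eq]
  exact le_csSup hcomp.bddAbove ⟨(u, v), ⟨hu, hv⟩, rfl⟩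

lemma scott_isOpen_hits {α : Type*} [EMetricSpace α] {U : Set α} (hU : IsOpen U) :
    IsOpen {K : Closeds α | ∃ t ∈ (K : Set α), t ∈ U} := by
  show IsOpen[(inferInstance : EMetricSpace (Closeds α)).toUniformSpace.toTopologicalSpace] _
  rw [EMetric.isOpen_iff]
  rintro K ⟨t, ht, htU⟩
  obtain ⟨r, hr, hball⟩ := EMetric.isOpen_iff.mp hU t htU
  refine ⟨r, hr, fun K' hK' => ?_⟩
  rw [Metric.mem_eball] at hK'
  obtain ⟨y, hy, hty⟩ := Metric.exists_edist_lt_of_hausdorffEDist_lt ht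
    (Metric.hausdorffEDist_comm.trans_lt hK')
  exact ⟨y, hy, hball (by rw [Metric.mem_eball, edist_comm]; exact hty)⟩

def sl (m : ℕ) : ℝ := 1 / (m + 1)

lemma sl_pos (m : ℕ) : 0 < sl m := by unfold sl; positivity

def BadSet (a b : ℝ) (ε δ : ℝ) (n : ℕ) : Set (C(Icc a b, ℝ) × KSpace a b) :=
  {p | ∃ z : Fin n → (Icc a b × Icc a b × Icc a b × Icc a b),
    (∀ i, (z i).1 ∈ ((p.2 : KSpace a b) : Set (Icc a b)) ∧
        (z i).2.1 ∈ ((p.2 : KSpace a b) : Set (Icc a b))) ∧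
    (∀ i, ((z i).1 : ℝ) ≤ ((z i).2.2.1 : ℝ) ∧ ((z i).2.2.1 : ℝ) ≤ ((z i).2.1 : ℝ) ∧
      ((z i).1 : ℝ) ≤ ((z i).2.2.2 : ℝ) ∧ ((z i).2.2.2 : ℝ) ≤ ((z i).2.1 : ℝ)) ∧
    (∀ i j : Fin n, i < j → ((z i).2.1 : ℝ) ≤ ((z j).1 : ℝ)) ∧
    (∑ i, (((z i).2.1 : ℝ) - ((z i).1 : ℝ))) ≤ δ ∧
    ε ≤ ∑ i, |p.1 ((z i).2.2.1) - p.1 ((z i).2.2.2)|}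

def SideCond (δ : ℝ) (n m : ℕ) (w : Fin n → ℚ × ℚ × ℚ × ℚ) : Prop :=
  (∀ i, ((w i).1 : ℝ) - sl m ≤ ((w i).2.2.1 : ℝ) ∧ ((w i).2.2.1 : ℝ) ≤ ((w i).2.1 : ℝ) + sl m ∧
    ((w i).1 : ℝ) - sl m ≤ ((w i).2.2.2 : ℝ) ∧ ((w i).2.2.2 : ℝ) ≤ ((w i).2.1 : ℝ) + sl m) ∧
  (∀ i j : Fin n, i < j → ((w i).2.1 : ℝ) ≤ ((w j).1 : ℝ) + sl m) ∧
  (∑ i, (((w i).2.1 : ℝ) - ((w i).1 : ℝ))) ≤ δ + sl m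

def ASet (a b : ℝ) (hab : a ≤ b) (ε δ : ℝ) (n m : ℕ) : Set (C(Icc a b, ℝ) × KSpace a b) :=
  ⋃ (w : Fin n → ℚ × ℚ × ℚ × ℚ) (_ : SideCond δ n m w),
    (Prod.fst ⁻¹' {f : C(Icc a b, ℝ) |
        ε - sl m ≤ ∑ i, |f (projIcc a b hab ((w i).2.2.1 : ℝ)) -
          f (projIcc a b hab ((w i).2.2.2 : ℝ))|}) ∩
    (Prod.snd ⁻¹' ⋂ i,
      ({K : KSpace a b | ∃ t ∈ (K : Set (Icc a b)), |(t : ℝ) - ((w i).1 : ℝ)| < sl m} ∩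
       {K : KSpace a b | ∃ t ∈ (K : Set (Icc a b)), |(t : ℝ) - ((w i).2.1 : ℝ)| < sl m}))

lemma badSet_subset_ASet (a b : ℝ) (hab : a ≤ b) (ε δ : ℝ) (n m : ℕ) :
    BadSet a b ε δ n ⊆ ASet a b hab ε δ n m := by
  rintro p ⟨z, hmem, hord, hsep, hsum, hosc⟩
  haveI : CompactSpace (Icc a b) := isCompact_iff_compactSpace.mp isCompact_Icc
  have hs : 0 < sl m := sl_pos m
  set g : ℝ → ℝ := fun t => p.1 (projIcc a b hab t) with hg_def
  have hgu : UniformContinuous g :=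
    (CompactSpace.uniformContinuous_of_continuous p.1.continuous).comp
      (LipschitzWith.projIcc hab).uniformContinuous
  have hgval : ∀ t : Icc a b, g ↑t = p.1 t := fun t => congrArg p.1 (projIcc_val hab t)
  set c : ℝ := 2 * n + 2 with hc_def
  have hc : (0:ℝ) < c := by positivity
  set ε₀ : ℝ := sl m / c with hε₀_def
  have hε₀ : 0 < ε₀ := div_pos hs hc
  obtain ⟨δ₀, hδ₀pos, hδ₀⟩ := Metric.uniformContinuous_iff.mp hgu ε₀ hε₀
  set η : ℝ := min (sl m / (2 * c)) δ₀ with hη_def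
  have hη : 0 < η := lt_min (by positivity) hδ₀pos
  have hηc : η ≤ sl m / (2 * c) := min_le_left _ _
  have hηs : η ≤ sl m := by
    refine le_trans hηc ?_
    rw [div_le_iff₀ (by positivity)]
    nlinarith [Nat.cast_nonneg (α := ℝ) n]
  have hηδ₀ : η ≤ δ₀ := min_le_right _ _
  have hex : ∀ r : ℝ, ∃ q : ℚ, r < q ∧ (q : ℝ) < r + η :=
    fun r => exists_rat_btwn (lt_add_of_pos_right r hη)
  choose qx hqx1 hqx2 using fun i => hex ((z i).1 : ℝ)
  choose qy hqy1 hqy2 using fun i => hex ((z i).2.1 : ℝ)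
  choose qu hqu1 hqu2 using fun i => hex ((z i).2.2.1 : ℝ)
  choose qv hqv1 hqv2 using fun i => hex ((z i).2.2.2 : ℝ)
  have hkeyn : (n:ℝ) * η ≤ sl m := by
    have h1 : (n:ℝ) * η ≤ (n:ℝ) * (sl m / (2*c)) :=
      mul_le_mul_of_nonneg_left hηc (Nat.cast_nonneg n)
    have h2 : (n:ℝ) * (sl m / (2*c)) ≤ sl m := by
      rw [mul_div_assoc', div_le_iff₀ (by positivity)]
      nlinarith [Nat.cast_nonneg (α := ℝ) n]
    linarith
  have hside : SideCond δ n m (fun i => (qx i, qy i, qu i, qv i)) := by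
    refine ⟨fun i => ?_, fun i j hij => ?_, ?_⟩
    · obtain ⟨h1, h2, h3, h4⟩ := hord i
      have e1 := hqx2 i; have e2 := hqu1 i; have e3 := hqu2 i; have e4 := hqy1 i
      have e5 := hqv1 i; have e6 := hqv2 i
      exact ⟨by dsimp only; linarith, by dsimp only; linarith,
        by dsimp only; linarith, by dsimp only; linarith⟩
    · have := hsep i j hij
      have e1 := hqy2 i; have e2 := hqx1 j
      dsimp only; linarith
    · dsimp only
      have hterm : ∀ i, ((qy i : ℝ) - (qx i : ℝ)) ≤ (((z i).2.1 : ℝ) - ((z i).1 : ℝ)) + η := by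
        intro i; linarith [hqy2 i, hqx1 i]
      calc (∑ i, ((qy i : ℝ) - (qx i : ℝ)))
          ≤ ∑ i, ((((z i).2.1 : ℝ) - ((z i).1 : ℝ)) + η) := Finset.sum_le_sum fun i _ => hterm i
        _ = (∑ i, (((z i).2.1 : ℝ) - ((z i).1 : ℝ))) + n * η := by
            rw [Finset.sum_add_distrib]; simp [mul_comm]
        _ ≤ δ + sl m := by linarith
  refine mem_iUnion.mpr ⟨fun i => (qx i, qy i, qu i, qv i), mem_iUnion.mpr ⟨hside, ?_, ?_⟩⟩
  · -- the f-condition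
    show ε - sl m ≤ _
    have hdist : ∀ (r : ℝ) (q : ℚ), r < q → (q:ℝ) < r + η → |g r - g q| < ε₀ := by
      intro r q h1 h2
      have hd : dist r (q:ℝ) < δ₀ := by
        rw [Real.dist_eq, abs_lt]; constructor <;> linarith
      have := hδ₀ hd
      rwa [Real.dist_eq] at this
    have hper : ∀ i, |p.1 ((z i).2.2.1) - p.1 ((z i).2.2.2)| ≤
        |g (qu i) - g (qv i)| + 2 * ε₀ := by
      intro i
      have h1 := hdist _ _ (hqu1 i) (hqu2 i)
      have h2 := hdist _ _ (hqv1 i) (hqv2 i)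
      rw [← hgval ((z i).2.2.1), ← hgval ((z i).2.2.2)]
      have t1 := abs_sub_le (g ((z i).2.2.1 : ℝ)) (g (qu i)) (g ((z i).2.2.2 : ℝ))
      have t2 := abs_sub_le (g (qu i)) (g (qv i)) (g ((z i).2.2.2 : ℝ))
      have a2 := abs_sub_comm (g (qv i)) (g ((z i).2.2.2 : ℝ))
      linarith
    have hsum2 : ε ≤ (∑ i, |g (qu i) - g (qv i)|) + n * (2 * ε₀) := by
      calc ε ≤ ∑ i, |p.1 ((z i).2.2.1) - p.1 ((z i).2.2.2)| := hosc
        _ ≤ ∑ i, (|g (qu i) - g (qv i)| + 2 * ε₀) := Finset.sum_le_sum fun i _ => hper i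
        _ = (∑ i, |g (qu i) - g (qv i)|) + n * (2 * ε₀) := by
            rw [Finset.sum_add_distrib]; simp [mul_comm]
    have h2n : 2*(n:ℝ)/c ≤ 1 := by
      rw [div_le_one hc, hc_def]; linarith [Nat.cast_nonneg (α := ℝ) n]
    have hkey : (n:ℝ) * (2 * ε₀) ≤ sl m := by
      have heq : (n:ℝ) * (2 * ε₀) = (2*(n:ℝ)/c) * sl m := by rw [hε₀_def]; ring
      rw [heq]
      nlinarith
    have hfin : ε - sl m ≤ ∑ i, |g (qu i) - g (qv i)| := by linarith
    exact hfin
  · -- the K-condition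
    refine mem_iInter.mpr fun i => ⟨⟨(z i).1, (hmem i).1, ?_⟩, ⟨(z i).2.1, (hmem i).2, ?_⟩⟩
    · show |((z i).1 : ℝ) - ((qx i : ℚ) : ℝ)| < sl m
      rw [abs_lt]
      have h1 := hqx1 i; have h2 := hqx2 i
      constructor <;> linarith
    · show |((z i).2.1 : ℝ) - ((qy i : ℚ) : ℝ)| < sl m
      rw [abs_lt]
      have := hqy1 i; have := hqy2 i; constructor <;> linarith

lemma sl_le_one (m : ℕ) : sl m ≤ 1 := by
  unfold sl
  rw [div_le_one (by positivity)]
  linarith [Nat.cast_nonneg (α := ℝ) m]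

lemma iInter_ASet_subset (a b : ℝ) (hab : a ≤ b) (ε δ : ℝ) (n : ℕ) :
    (⋂ m, ASet a b hab ε δ n m) ⊆ BadSet a b ε δ n := by
  intro p hp
  haveI : CompactSpace (Icc a b) := isCompact_iff_compactSpace.mp isCompact_Icc
  simp only [mem_iInter, ASet, mem_iUnion, mem_inter_iff, mem_preimage, mem_setOf_eq,
    mem_iInter] at hp
  choose w hside hf hK using hp
  set g : ℝ → ℝ := fun t => p.1 (projIcc a b hab t) with hg_def
  have hgc : Continuous g := p.1.continuous.comp continuous_projIcc
  set box : Set ℝ := Icc (a - 3) (b + 3) with hbox_def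
  set W : ℕ → Fin n → ℝ × ℝ × ℝ × ℝ := fun m i =>
    (((w m i).1 : ℝ), ((w m i).2.1 : ℝ), ((w m i).2.2.1 : ℝ), ((w m i).2.2.2 : ℝ)) with hW_def
  have hbound : ∀ m i, W m i ∈ box ×ˢ box ×ˢ box ×ˢ box := by
    intro m i
    obtain ⟨⟨tx, htx, hdx⟩, ⟨ty, hty, hdy⟩⟩ := hK m i
    have h1 := sl_le_one m
    have habsx := abs_lt.mp hdx
    have habsy := abs_lt.mp hdy
    have htx2 := tx.2.1; have htx3 := tx.2.2
    have hty2 := ty.2.1; have hty3 := ty.2.2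
    have hx : ((w m i).1 : ℝ) ∈ box := ⟨by linarith, by linarith⟩
    have hy : ((w m i).2.1 : ℝ) ∈ box := ⟨by linarith, by linarith⟩
    obtain ⟨o1, o2, o3, o4⟩ := (hside m).1 i
    have hu : ((w m i).2.2.1 : ℝ) ∈ box := ⟨by obtain ⟨hx1, _⟩ := hx; linarith,
      by obtain ⟨_, hy2⟩ := hy; linarith⟩
    have hv : ((w m i).2.2.2 : ℝ) ∈ box := ⟨by obtain ⟨hx1, _⟩ := hx; linarith,
      by obtain ⟨_, hy2⟩ := hy; linarith⟩
    exact ⟨hx, hy, hu, hv⟩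
  have hS : IsCompact (univ.pi fun _ : Fin n => box ×ˢ box ×ˢ box ×ˢ box) :=
    isCompact_univ_pi fun _ =>
      isCompact_Icc.prod (isCompact_Icc.prod (isCompact_Icc.prod isCompact_Icc))
  have hWS : ∀ m, W m ∈ univ.pi fun _ : Fin n => box ×ˢ box ×ˢ box ×ˢ box :=
    fun m => fun i _ => hbound m i
  obtain ⟨L, _, φ, hφ, hconv⟩ := hS.tendsto_subseq hWS
  have hsltend : Tendsto (fun k => sl (φ k)) atTop (𝓝 0) := by
    have h0 : Tendsto sl atTop (𝓝 0) := by
      unfold sl; exact tendsto_one_div_add_atTop_nhds_zero_nat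
    exact h0.comp hφ.tendsto_atTop
  have hcoord : ∀ i, Tendsto (fun k => W (φ k) i) atTop (𝓝 (L i)) :=
    fun i => (tendsto_pi_nhds.mp hconv) i
  set X : Fin n → ℝ := fun i => (L i).1 with hX_def
  set Y : Fin n → ℝ := fun i => (L i).2.1 with hY_def
  set U : Fin n → ℝ := fun i => (L i).2.2.1 with hU_def
  set V : Fin n → ℝ := fun i => (L i).2.2.2 with hV_def
  have hxt : ∀ i, Tendsto (fun k => ((w (φ k) i).1 : ℝ)) atTop (𝓝 (X i)) :=
    fun i => (continuous_fst.tendsto (L i)).comp (hcoord i)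
  have hyt : ∀ i, Tendsto (fun k => ((w (φ k) i).2.1 : ℝ)) atTop (𝓝 (Y i)) :=
    fun i => ((continuous_fst.comp continuous_snd).tendsto (L i)).comp (hcoord i)
  have hut : ∀ i, Tendsto (fun k => ((w (φ k) i).2.2.1 : ℝ)) atTop (𝓝 (U i)) :=
    fun i => ((continuous_fst.comp (continuous_snd.comp continuous_snd)).tendsto (L i)).comp
      (hcoord i)
  have hvt : ∀ i, Tendsto (fun k => ((w (φ k) i).2.2.2 : ℝ)) atTop (𝓝 (V i)) :=
    fun i => ((continuous_snd.comp (continuous_snd.comp continuous_snd)).tendsto (L i)).comp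
      (hcoord i)
  -- memberships
  have hmemgen : ∀ (r : Fin n → ℝ),
      (∀ i, Tendsto (fun k => ((w (φ k) i).1 : ℝ)) atTop (𝓝 (r i))) → True := fun _ _ => trivial
  have hmemX : ∀ i, ∃ hx : X i ∈ Icc a b, (⟨X i, hx⟩ : Icc a b) ∈ (p.2 : Set (Icc a b)) := by
    intro i
    choose t ht hdist using fun k => (hK (φ k) i).1
    have htt : Tendsto (fun k => ((t k : Icc a b) : ℝ)) atTop (𝓝 (X i)) := by
      rw [tendsto_iff_dist_tendsto_zero]
      refine squeeze_zero (fun k => dist_nonneg)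
        (fun k => ?_) (by simpa using hsltend.add (tendsto_iff_dist_tendsto_zero.mp (hxt i)))
      calc dist ((t k : Icc a b) : ℝ) (X i)
          ≤ dist ((t k : Icc a b) : ℝ) ((w (φ k) i).1 : ℝ) + dist ((w (φ k) i).1 : ℝ) (X i) :=
            dist_triangle _ _ _
        _ ≤ sl (φ k) + dist ((w (φ k) i).1 : ℝ) (X i) := by
            have := hdist k
            rw [Real.dist_eq]
            exact add_le_add_left (le_of_lt this) _
    have hXmem : X i ∈ Icc a b :=
      isClosed_Icc.mem_of_tendsto htt (Eventually.of_forall fun k => (t k).2)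
    refine ⟨hXmem, ?_⟩
    have htt' : Tendsto (fun k => t k) atTop (𝓝 (⟨X i, hXmem⟩ : Icc a b)) := by
      rw [Topology.IsEmbedding.subtypeVal.tendsto_nhds_iff]
      exact htt
    exact (p.2).isClosed.mem_of_tendsto htt' (Eventually.of_forall ht)
  have hmemY : ∀ i, ∃ hy : Y i ∈ Icc a b, (⟨Y i, hy⟩ : Icc a b) ∈ (p.2 : Set (Icc a b)) := by
    intro i
    choose t ht hdist using fun k => (hK (φ k) i).2
    have htt : Tendsto (fun k => ((t k : Icc a b) : ℝ)) atTop (𝓝 (Y i)) := by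
      rw [tendsto_iff_dist_tendsto_zero]
      refine squeeze_zero (fun k => dist_nonneg)
        (fun k => ?_) (by simpa using hsltend.add (tendsto_iff_dist_tendsto_zero.mp (hyt i)))
      calc dist ((t k : Icc a b) : ℝ) (Y i)
          ≤ dist ((t k : Icc a b) : ℝ) ((w (φ k) i).2.1 : ℝ) + dist ((w (φ k) i).2.1 : ℝ) (Y i) :=
            dist_triangle _ _ _
        _ ≤ sl (φ k) + dist ((w (φ k) i).2.1 : ℝ) (Y i) := by
            have := hdist k
            rw [Real.dist_eq]
            exact add_le_add_left (le_of_lt this) _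
    have hYmem : Y i ∈ Icc a b :=
      isClosed_Icc.mem_of_tendsto htt (Eventually.of_forall fun k => (t k).2)
    refine ⟨hYmem, ?_⟩
    have htt' : Tendsto (fun k => t k) atTop (𝓝 (⟨Y i, hYmem⟩ : Icc a b)) := by
      rw [Topology.IsEmbedding.subtypeVal.tendsto_nhds_iff]
      exact htt
    exact (p.2).isClosed.mem_of_tendsto htt' (Eventually.of_forall ht)
  -- inequalities in the limit
  have hXU : ∀ i, X i ≤ U i := by
    intro i
    have hl : Tendsto (fun k => ((w (φ k) i).1 : ℝ) - sl (φ k)) atTop (𝓝 (X i)) := by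
      simpa using (hxt i).sub hsltend
    exact le_of_tendsto_of_tendsto' hl (hut i) fun k => ((hside (φ k)).1 i).1
  have hUY : ∀ i, U i ≤ Y i := by
    intro i
    have hr : Tendsto (fun k => ((w (φ k) i).2.1 : ℝ) + sl (φ k)) atTop (𝓝 (Y i)) := by
      simpa using (hyt i).add hsltend
    exact le_of_tendsto_of_tendsto' (hut i) hr fun k => ((hside (φ k)).1 i).2.1
  have hXV : ∀ i, X i ≤ V i := by
    intro i
    have hl : Tendsto (fun k => ((w (φ k) i).1 : ℝ) - sl (φ k)) atTop (𝓝 (X i)) := by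
      simpa using (hxt i).sub hsltend
    exact le_of_tendsto_of_tendsto' hl (hvt i) fun k => ((hside (φ k)).1 i).2.2.1
  have hVY : ∀ i, V i ≤ Y i := by
    intro i
    have hr : Tendsto (fun k => ((w (φ k) i).2.1 : ℝ) + sl (φ k)) atTop (𝓝 (Y i)) := by
      simpa using (hyt i).add hsltend
    exact le_of_tendsto_of_tendsto' (hvt i) hr fun k => ((hside (φ k)).1 i).2.2.2
  have hsep' : ∀ i j : Fin n, i < j → Y i ≤ X j := by
    intro i j hij
    have hr : Tendsto (fun k => ((w (φ k) j).1 : ℝ) + sl (φ k)) atTop (𝓝 (X j)) := by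
      simpa using (hxt j).add hsltend
    exact le_of_tendsto_of_tendsto' (hyt i) hr fun k => (hside (φ k)).2.1 i j hij
  have hsum' : (∑ i, (Y i - X i)) ≤ δ := by
    have hl : Tendsto (fun k => ∑ i, (((w (φ k) i).2.1 : ℝ) - ((w (φ k) i).1 : ℝ))) atTop
        (𝓝 (∑ i, (Y i - X i))) :=
      tendsto_finset_sum _ fun i _ => (hyt i).sub (hxt i)
    have hr : Tendsto (fun k => δ + sl (φ k)) atTop (𝓝 δ) := by
      simpa using tendsto_const_nhds.add hsltend
    exact le_of_tendsto_of_tendsto' hl hr fun k => (hside (φ k)).2.2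
  have hosc' : ε ≤ ∑ i, |g (U i) - g (V i)| := by
    have hl : Tendsto (fun k => ε - sl (φ k)) atTop (𝓝 ε) := by
      simpa using tendsto_const_nhds.sub hsltend
    have hr : Tendsto (fun k => ∑ i, |g ((w (φ k) i).2.2.1 : ℝ) - g ((w (φ k) i).2.2.2 : ℝ)|)
        atTop (𝓝 (∑ i, |g (U i) - g (V i)|)) :=
      tendsto_finset_sum _ fun i _ =>
        (((hgc.tendsto _).comp (hut i)).sub ((hgc.tendsto _).comp (hvt i))).abs
    exact le_of_tendsto_of_tendsto' hl hr fun k => hf (φ k)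
  -- assemble the witness
  have hUmem : ∀ i, U i ∈ Icc a b := fun i =>
    ⟨le_trans (hmemX i).choose.1 (hXU i), le_trans (hUY i) (hmemY i).choose.2⟩
  have hVmem : ∀ i, V i ∈ Icc a b := fun i =>
    ⟨le_trans (hmemX i).choose.1 (hXV i), le_trans (hVY i) (hmemY i).choose.2⟩
  refine ⟨fun i => (⟨X i, (hmemX i).choose⟩, ⟨Y i, (hmemY i).choose⟩, ⟨U i, hUmem i⟩,
    ⟨V i, hVmem i⟩), fun i => ⟨(hmemX i).choose_spec, (hmemY i).choose_spec⟩,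
    fun i => ⟨hXU i, hUY i, hXV i, hVY i⟩, hsep', hsum', ?_⟩
  have hval : ∀ i, p.1 (⟨U i, hUmem i⟩ : Icc a b) = g (U i) := by
    intro i
    rw [hg_def]
    exact (congrArg p.1 (projIcc_of_mem hab (hUmem i))).symm
  have hval' : ∀ i, p.1 (⟨V i, hVmem i⟩ : Icc a b) = g (V i) := by
    intro i
    rw [hg_def]
    exact (congrArg p.1 (projIcc_of_mem hab (hVmem i))).symm
  calc ε ≤ ∑ i, |g (U i) - g (V i)| := hosc'
    _ = ∑ i, |p.1 (⟨U i, hUmem i⟩ : Icc a b) - p.1 (⟨V i, hVmem i⟩ : Icc a b)| := by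
        refine Finset.sum_congr rfl fun i _ => ?_
        rw [hval i, hval' i]

lemma measurableSet_ASet (a b : ℝ) (hab : a ≤ b) (ε δ : ℝ) (n m : ℕ) :
    MeasurableSet[borel (C(Icc a b, ℝ) × KSpace a b)] (ASet a b hab ε δ n m) := by
  letI : MeasurableSpace C(Icc a b, ℝ) := borel _
  haveI : BorelSpace C(Icc a b, ℝ) := ⟨rfl⟩
  letI : MeasurableSpace (KSpace a b) := borel _
  haveI : BorelSpace (KSpace a b) := ⟨rfl⟩
  letI : MeasurableSpace (C(Icc a b, ℝ) × KSpace a b) := borel _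
  haveI : BorelSpace (C(Icc a b, ℝ) × KSpace a b) := ⟨rfl⟩
  apply MeasurableSet.iUnion; intro w
  apply MeasurableSet.iUnion; intro _
  apply MeasurableSet.inter
  · refine (IsClosed.measurableSet ?_).preimage continuous_fst.measurable
    apply isClosed_le continuous_const
    apply continuous_finset_sum
    intro i _
    exact ((continuous_eval_const _).sub (continuous_eval_const _)).abs
  · refine (IsOpen.measurableSet ?_).preimage continuous_snd.measurable
    apply isOpen_iInter_of_finite
    intro i
    apply IsOpen.inter
    · exact scott_isOpen_hits (isOpen_lt ((continuous_subtype_val.sub continuous_const).abs)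
        continuous_const)
    · exact scott_isOpen_hits (isOpen_lt ((continuous_subtype_val.sub continuous_const).abs)
        continuous_const)


lemma badSet_eq_iInter (a b : ℝ) (hab : a ≤ b) (ε δ : ℝ) (n : ℕ) :
    BadSet a b ε δ n = ⋂ m, ASet a b hab ε δ n m :=
  subset_antisymm (subset_iInter fun m => badSet_subset_ASet a b hab ε δ n m)
    (iInter_ASet_subset a b hab ε δ n)

lemma measurableSet_badSet (a b : ℝ) (hab : a ≤ b) (ε δ : ℝ) (n : ℕ) :
    MeasurableSet[borel (C(Icc a b, ℝ) × KSpace a b)] (BadSet a b ε δ n) := by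
  rw [badSet_eq_iInter a b hab ε δ n]
  exact MeasurableSet.iInter fun m => measurableSet_ASet a b hab ε δ n m

lemma acstar_iff (a b : ℝ) (hab : a < b) (p : C(Icc a b, ℝ) × KSpace a b) :
    ACStar a b (fun x => p.1 (projIcc a b hab.le x)) (Subtype.val '' (p.2 : Set (Icc a b))) ↔
      ∀ ε : ℚ, 0 < ε → ∃ δ : ℚ, 0 < δ ∧ ∀ n : ℕ, p ∉ BadSet a b ε δ n := by
  set F : ℝ → ℝ := fun x => p.1 (projIcc a b hab.le x) with hF_def
  have hFc : Continuous F := p.1.continuous.comp continuous_projIcc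
  have hFval : ∀ t : Icc a b, F ↑t = p.1 t := fun t => congrArg p.1 (projIcc_val hab.le t)
  constructor
  · intro h ε hε
    obtain ⟨δ₀, hδ₀, hD⟩ := h ε (by exact_mod_cast hε)
    obtain ⟨δ, hδ0, hδlt⟩ := exists_rat_btwn hδ₀
    refine ⟨δ, by exact_mod_cast hδ0, fun n => ?_⟩
    rintro ⟨z, hmem, hord, hsep, hsum, hosc⟩
    classical
    set J : Finset (Fin n) :=
      Finset.univ.filter (fun i => ((z i).1 : ℝ) < ((z i).2.1 : ℝ)) with hJ_def
    set pr : Fin n → ℝ × ℝ := fun i => (((z i).1 : ℝ), ((z i).2.1 : ℝ)) with hpr_def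
    have hJlt : ∀ i ∈ J, ((z i).1 : ℝ) < ((z i).2.1 : ℝ) := by
      intro i hi; exact (Finset.mem_filter.mp hi).2
    have hinj : ∀ i ∈ J, ∀ j ∈ J, pr i = pr j → i = j := by
      intro i hi j hj hij
      by_contra hne
      have h1 : ((z i).1 : ℝ) = ((z j).1 : ℝ) := congrArg Prod.fst hij
      have h2 : ((z i).2.1 : ℝ) = ((z j).2.1 : ℝ) := congrArg Prod.snd hij
      rcases Ne.lt_or_gt hne with hlt | hlt
      · have := hsep i j hlt
        have := hJlt i hi
        linarith
      · have := hsep j i hlt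
        have := hJlt j hj
        linarith
    have hzero : ∀ i ∉ J, |p.1 ((z i).2.2.1) - p.1 ((z i).2.2.2)| = 0 := by
      intro i hi
      obtain ⟨o1, o2, o3, o4⟩ := hord i
      have hxy : ((z i).1 : ℝ) = ((z i).2.1 : ℝ) := by
        have : ¬ ((z i).1 : ℝ) < ((z i).2.1 : ℝ) := by
          intro hlt
          exact hi (Finset.mem_filter.mpr ⟨Finset.mem_univ i, hlt⟩)
        linarith
      have huv : (z i).2.2.1 = (z i).2.2.2 := by
        apply Subtype.ext
        have e1 : ((z i).2.2.1 : ℝ) = ((z i).1 : ℝ) := by linarith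
        have e2 : ((z i).2.2.2 : ℝ) = ((z i).1 : ℝ) := by linarith
        rw [e1, e2]
      rw [huv, sub_self, abs_zero]
    have hJne : J.Nonempty := by
      rw [Finset.nonempty_iff_ne_empty]
      intro hJe
      have hzsum : (∑ i, |p.1 ((z i).2.2.1) - p.1 ((z i).2.2.2)|) = 0 := by
        apply Finset.sum_eq_zero
        intro i _
        apply hzero
        rw [hJe]
        exact Finset.notMem_empty i
      rw [hzsum] at hosc
      have : (0:ℝ) < ε := by exact_mod_cast hε
      linarith
    set D : Finset (ℝ × ℝ) := J.image pr with hD_def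
    have hprep : IsPrePartition a b (Subtype.val '' (p.2 : Set (Icc a b))) D := by
      refine ⟨hJne.image pr, ?_, ?_⟩
      · intro q hq
        obtain ⟨i, hi, rfl⟩ := Finset.mem_image.mp hq
        refine ⟨le_of_lt (hJlt i hi), ⟨(z i).1, (hmem i).1, rfl⟩, ⟨(z i).2.1, (hmem i).2, rfl⟩, ?_⟩
        exact Icc_subset_Icc (z i).1.2.1 (z i).2.1.2.2
      · intro P hP Q hQ hPQ
        obtain ⟨i, hi, rfl⟩ := Finset.mem_image.mp hP
        obtain ⟨j, hj, rfl⟩ := Finset.mem_image.mp hQ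
        have hne : i ≠ j := fun hij => hPQ (by rw [hij])
        rcases Ne.lt_or_gt hne with hlt | hlt
        · exact Or.inl (hsep i j hlt)
        · exact Or.inr (hsep j i hlt)
    have hsumD : (∑ q ∈ D, (q.2 - q.1)) ≤ ∑ i, (((z i).2.1 : ℝ) - ((z i).1 : ℝ)) := by
      rw [hD_def, Finset.sum_image hinj]
      apply Finset.sum_le_sum_of_subset_of_nonneg (Finset.subset_univ J)
      intro i _ _
      obtain ⟨o1, o2, _, _⟩ := hord i
      simp only [hpr_def]
      linarith
    have hlt : (∑ q ∈ D, (q.2 - q.1)) < δ₀ := lt_of_le_of_lt (le_trans hsumD hsum) hδlt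
    have hosc2 := hD D hprep hlt
    have hoscD : (ε:ℝ) ≤ ∑ q ∈ D, osc F (Icc q.1 q.2) := by
      have hstep1 : (∑ i, |p.1 ((z i).2.2.1) - p.1 ((z i).2.2.2)|)
          = ∑ i ∈ J, |p.1 ((z i).2.2.1) - p.1 ((z i).2.2.2)| := by
        symm
        apply Finset.sum_subset (Finset.subset_univ J)
        intro i _ hi
        exact hzero i hi
      have hstep2 : ∀ i ∈ J, |p.1 ((z i).2.2.1) - p.1 ((z i).2.2.2)|
          ≤ osc F (Icc (pr i).1 (pr i).2) := by
        intro i hi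
        obtain ⟨o1, o2, o3, o4⟩ := hord i
        rw [← hFval ((z i).2.2.1), ← hFval ((z i).2.2.2)]
        exact le_osc hFc ⟨o1, o2⟩ ⟨o3, o4⟩
      calc (ε:ℝ) ≤ ∑ i, |p.1 ((z i).2.2.1) - p.1 ((z i).2.2.2)| := hosc
        _ = ∑ i ∈ J, |p.1 ((z i).2.2.1) - p.1 ((z i).2.2.2)| := hstep1
        _ ≤ ∑ i ∈ J, osc F (Icc (pr i).1 (pr i).2) := Finset.sum_le_sum hstep2
        _ = ∑ q ∈ D, osc F (Icc q.1 q.2) := by rw [hD_def, Finset.sum_image hinj]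
    linarith
  · intro h ε hε
    obtain ⟨q, hq0, hqε⟩ := exists_rat_btwn hε
    have hq0' : 0 < q := by exact_mod_cast hq0
    obtain ⟨δ, hδ0, hbad⟩ := h q hq0'
    refine ⟨(δ : ℝ), by exact_mod_cast hδ0, fun D hprep hsum => ?_⟩
    by_contra hge
    push_neg at hge
    set n : ℕ := D.card with hn_def
    set Dl : Finset (ℝ ×ₗ ℝ) := D.image toLex with hDl_def
    have hcard : Dl.card = n := by
      rw [hDl_def, Finset.card_image_of_injective D toLex.injective]
    set e := Dl.orderIsoOfFin hcard with he_def
    set pr : Fin n → ℝ × ℝ := fun i => ofLex (e i).1 with hpr_def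
    have hprD : ∀ i, pr i ∈ D := by
      intro i
      have h1 : (e i).1 ∈ D.image toLex := (e i).2
      obtain ⟨r, hr, hre⟩ := Finset.mem_image.mp h1
      have hpe : pr i = r := by
        show ofLex (e i).1 = r
        rw [← hre]
        rfl
      exact hpe ▸ hr
    have hmono : ∀ i j : Fin n, i < j → (pr i).2 ≤ (pr j).1 := by
      intro i j hij
      have hlt : (e i).1 < (e j).1 := by
        have := e.strictMono hij
        exact this
      have hne : pr i ≠ pr j := by
        intro hEq
        have : (e i).1 = (e j).1 := by
          have := congrArg toLex hEq
          simpa [hpr_def] using this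
        exact absurd this (ne_of_lt hlt)
      have hcases := Prod.Lex.lt_iff (x := (e i).1) (y := (e j).1)
      have hP1 := (hprep.2.1 (pr i) (hprD i)).1
      have hQ1 := (hprep.2.1 (pr j) (hprD j)).1
      rcases hprep.2.2 (by exact Finset.mem_coe.mpr (hprD i))
          (by exact Finset.mem_coe.mpr (hprD j)) hne with hc | hc
      · exact hc
      · exfalso
        rcases hcases.mp hlt with h1 | ⟨h1, h2⟩
        · simp only [hpr_def] at *
          linarith
        · simp only [hpr_def] at *
          linarith
    have hprinj : Function.Injective pr := by
      intro i j hij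
      have : (e i).1 = (e j).1 := by
        have := congrArg toLex hij
        simpa [hpr_def] using this
      exact e.injective (Subtype.ext this)
    have hbijsum : ∀ G : ℝ × ℝ → ℝ, (∑ i : Fin n, G (pr i)) = ∑ r ∈ D, G r := by
      intro G
      apply Finset.sum_bij (fun (i : Fin n) _ => pr i)
      · intro i _; exact hprD i
      · intro i _ j _ hij; exact hprinj hij
      · intro r hr
        have h1 : toLex r ∈ Dl := Finset.mem_image_of_mem _ hr
        obtain ⟨i, hi⟩ := e.surjective ⟨toLex r, h1⟩
        refine ⟨i, Finset.mem_univ i, ?_⟩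
        rw [hpr_def]
        simp only [hi]
        rfl
      · intro i _; rfl
    -- endpoints and osc witnesses
    have hIccsub : ∀ i, Icc (pr i).1 (pr i).2 ⊆ Icc a b :=
      fun i => (hprep.2.1 (pr i) (hprD i)).2.2.2
    have hxy : ∀ i, (pr i).1 ≤ (pr i).2 := fun i => (hprep.2.1 (pr i) (hprD i)).1
    choose u hu v hv hosc_eq using fun i : Fin n => osc_exists hFc (hxy i)
    have hxmem : ∀ i, (pr i).1 ∈ Icc a b := fun i =>
      hIccsub i ⟨le_refl _, hxy i⟩
    have hymem : ∀ i, (pr i).2 ∈ Icc a b := fun i =>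
      hIccsub i ⟨hxy i, le_refl _⟩
    have humem : ∀ i, u i ∈ Icc a b := fun i => hIccsub i (hu i)
    have hvmem : ∀ i, v i ∈ Icc a b := fun i => hIccsub i (hv i)
    have hxK : ∀ i, (⟨(pr i).1, hxmem i⟩ : Icc a b) ∈ (p.2 : Set (Icc a b)) := by
      intro i
      obtain ⟨zx, hzx, hval⟩ := (hprep.2.1 (pr i) (hprD i)).2.1
      have : (⟨(pr i).1, hxmem i⟩ : Icc a b) = zx := Subtype.ext hval.symm
      rw [this]; exact hzx
    have hyK : ∀ i, (⟨(pr i).2, hymem i⟩ : Icc a b) ∈ (p.2 : Set (Icc a b)) := by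
      intro i
      obtain ⟨zy, hzy, hval⟩ := (hprep.2.1 (pr i) (hprD i)).2.2.1
      have : (⟨(pr i).2, hymem i⟩ : Icc a b) = zy := Subtype.ext hval.symm
      rw [this]; exact hzy
    apply hbad n
    refine ⟨fun i => (⟨(pr i).1, hxmem i⟩, ⟨(pr i).2, hymem i⟩, ⟨u i, humem i⟩,
      ⟨v i, hvmem i⟩), fun i => ⟨hxK i, hyK i⟩,
      fun i => ⟨(hu i).1, (hu i).2, (hv i).1, (hv i).2⟩, hmono, ?_, ?_⟩
    · show (∑ i : Fin n, ((pr i).2 - (pr i).1)) ≤ (δ:ℝ)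
      rw [hbijsum (fun r => r.2 - r.1)]
      exact le_of_lt hsum
    · show (q:ℝ) ≤ ∑ i : Fin n, |p.1 (⟨u i, humem i⟩ : Icc a b) - p.1 (⟨v i, hvmem i⟩ : Icc a b)|
      have hterm : ∀ i : Fin n, |p.1 (⟨u i, humem i⟩ : Icc a b) - p.1 (⟨v i, hvmem i⟩ : Icc a b)|
          = osc F (Icc (pr i).1 (pr i).2) := by
        intro i
        rw [hosc_eq i,
          show F (u i) = p.1 (⟨u i, humem i⟩ : Icc a b) from
            congrArg p.1 (projIcc_of_mem hab.le (humem i)),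
          show F (v i) = p.1 (⟨v i, hvmem i⟩ : Icc a b) from
            congrArg p.1 (projIcc_of_mem hab.le (hvmem i))]
      calc (q:ℝ) ≤ ∑ r ∈ D, osc F (Icc r.1 r.2) := le_trans (le_of_lt hqε) hge
        _ = ∑ i : Fin n, osc F (Icc (pr i).1 (pr i).2) := (hbijsum _).symm
        _ = ∑ i : Fin n, |p.1 (⟨u i, humem i⟩ : Icc a b) - p.1 (⟨v i, hvmem i⟩ : Icc a b)| := by
            refine Finset.sum_congr rfl fun i _ => (hterm i).symm

end ACStarAux

theorem ACStar_borel (a b : ℝ) (hab : a < b) :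
    MeasurableSet[borel (C(Icc a b, ℝ) × KSpace a b)]
      {p : C(Icc a b, ℝ) × KSpace a b |
        ACStar a b (fun x => p.1 (projIcc a b hab.le x))
          (Subtype.val '' (p.2 : Set (Icc a b)))} := by
  have hset : {p : C(Icc a b, ℝ) × KSpace a b |
        ACStar a b (fun x => p.1 (projIcc a b hab.le x))
          (Subtype.val '' (p.2 : Set (Icc a b)))}
      = ⋂ (ε : ℚ), ⋂ (_ : 0 < ε), ⋃ (δ : ℚ), ⋃ (_ : 0 < δ), ⋂ (n : ℕ),
          (BadSet a b ε δ n)ᶜ := by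
    ext p
    simp only [mem_setOf_eq, mem_iInter, mem_iUnion, mem_compl_iff]
    rw [acstar_iff a b hab p]
    constructor
    · intro h ε hε
      obtain ⟨δ, hδ, hn⟩ := h ε hε
      exact ⟨δ, hδ, hn⟩
    · intro h ε hε
      obtain ⟨δ, hδ, hn⟩ := h ε hε
      exact ⟨δ, hδ, hn⟩
  rw [hset]
  refine MeasurableSet.iInter fun ε => MeasurableSet.iInter fun hε => ?_
  refine MeasurableSet.iUnion fun δ => MeasurableSet.iUnion fun hδ => ?_
  refine MeasurableSet.iInter fun n => ?_
  exact (measurableSet_badSet a b hab.le ε δ n).compl
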